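/- Let a ≼ b in ℕ³ with K^b I disconnected (equivalently dim_k H̃₀(K^b I;k) ≠ 0), and let v be a vertex of K^b I. If supp(b−a) is not contained in the vertex set of the connected component of v in K^b I (i.e. a does not lie behind b in the direction of the connected component of v), then the degree-0 canonical sylvan matrix entry satisfies D_{∅,v}^{a,b} = 0. -/

import Mathlib

open Classical

noncomputable section

namespace Sylvan

/-- Exponent vectors in three variables. -/
abbrev V3 := Fin 3 → ℕ

/-- The `i`-th standard basis vector. -/
def stdVec (i : Fin 3) : V3 := fun j => if j = i then 1 else 0

/-- A monomial ideal, identified with its (upward closed) set of exponent vectors. -/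
def IsMonomialIdeal (I : Set V3) : Prop :=
  ∀ ⦃c d : V3⦄, c ∈ I → (∀ i, c i ≤ d i) → d ∈ I

/-- The 0-1 indicator vector of a squarefree face. -/
def ind (τ : Finset (Fin 3)) : V3 := fun i => if i ∈ τ then 1 else 0

/-- The Koszul simplicial complex of `I` in degree `b`:
faces `τ` with `b ≥ τ` and `x^(b-τ) ∈ I`. -/
def K (I : Set V3) (b : V3) : Set (Finset (Fin 3)) :=
  {τ | (∀ i, ind τ i ≤ b i) ∧ (fun i => b i - ind τ i) ∈ I}

/-- `x^a` is a minimal monomial generator of `I`. -/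
def IsMinGen (I : Set V3) (a : V3) : Prop :=
  a ∈ I ∧ ∀ c ∈ I, (∀ i, c i ≤ a i) → c = a

/-- Reduced simplicial chains: formal `k`-linear combinations of faces
(the empty face included). -/
abbrev Ch (k : Type) [Field k] := Finset (Fin 3) →₀ k

variable (k : Type) [Field k]

/-- The sign `(-1)^(position of v in σ)`. -/
def esgn (v : Fin 3) (σ : Finset (Fin 3)) : ℤ :=
  (-1 : ℤ) ^ (σ.filter (fun u => u < v)).card

/-- The boundary of a single face. -/
def bd (σ : Finset (Fin 3)) : Ch k :=
  ∑ v ∈ σ, Finsupp.single (σ.erase v) ((esgn v σ : ℤ) : k)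

/-- The (reduced) simplicial boundary operator. -/
def bdry : Ch k →ₗ[k] Ch k :=
  Finsupp.lsum k fun σ => LinearMap.toSpanSingleton k (Ch k) (bd k σ)

/-- `coeffSign k v σ` is the coefficient of `σ \ {v}` in `∂σ`,
i.e. the sign `(-1)^{v,σ}` of the paper. -/
def coeffSign (v : Fin 3) (σ : Finset (Fin 3)) : k :=
  bdry k (Finsupp.single σ (1:k)) (σ.erase v)

/-- Faces of cardinality `c` (dimension `c-1`) of a simplicial complex. -/
def faces (Kc : Set (Finset (Fin 3))) (c : ℕ) : Set (Finset (Fin 3)) :=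
  {σ | σ ∈ Kc ∧ σ.card = c}

/-- Basis chains attached to a set of faces. -/
def sset (A : Set (Finset (Fin 3))) : Set (Ch k) :=
  (fun σ => Finsupp.single σ (1:k)) '' A

/-- The chain group `C̃_{c-1}(K;k)`, as the span of its card-`c` faces. -/
def chains (Kc : Set (Finset (Fin 3))) (c : ℕ) : Submodule k (Ch k) :=
  Submodule.span k (sset k (faces Kc c))

/-- The boundaries `B̃_{c-1}(K;k) = ∂ C̃_c(K;k)`, sitting among card-`c` chains. -/
def bdries (Kc : Set (Finset (Fin 3))) (c : ℕ) : Submodule k (Ch k) :=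
  (chains k Kc (c+1)).map (bdry k)

/-- A shrubbery in dimension `c-1` (faces of cardinality `c`): a set `T` of card-`c`
faces whose boundaries form a basis of `∂ C̃_{c-1}(K;k)`. -/
def IsShrubbery (Kc : Set (Finset (Fin 3))) (c : ℕ) (T : Finset (Finset (Fin 3))) : Prop :=
  (T : Set (Finset (Fin 3))) ⊆ faces Kc c ∧
  LinearIndependent k
    (fun σ : (T : Set (Finset (Fin 3))) => bdry k (Finsupp.single (σ : Finset (Fin 3)) (1:k))) ∧
  Submodule.span k ((fun σ => bdry k (Finsupp.single σ (1:k))) '' (T : Set (Finset (Fin 3)))) =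
    (chains k Kc c).map (bdry k)

/-- A stake set in dimension `c-1` (faces of cardinality `c`): a set `S` of card-`c`
faces whose complement maps to a basis of `C̃/B̃`. -/
def IsStakeSet (Kc : Set (Finset (Fin 3))) (c : ℕ) (S : Finset (Finset (Fin 3))) : Prop :=
  (S : Set (Finset (Fin 3))) ⊆ faces Kc c ∧
  Submodule.span k (sset k (faces Kc c \ (S : Set (Finset (Fin 3))))) ⊓ bdries k Kc c = ⊥ ∧
  Submodule.span k (sset k (faces Kc c \ (S : Set (Finset (Fin 3))))) ⊔ bdries k Kc c =
    chains k Kc c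

/-- The circuit `ζ(τ)` of a face `τ` with respect to a shrubbery `T`:
the unique cycle of the form `τ - t` with `t ∈ span T`. -/
def circuit (T : Finset (Finset (Fin 3))) (τ : Finset (Fin 3)) : Ch k :=
  if h : ∃! z : Ch k, bdry k z = 0 ∧
      Finsupp.single τ (1:k) - z ∈ Submodule.span k (sset k (T : Set (Finset (Fin 3))))
  then h.exists.choose else 0

/-- The shrub `s(σ)` of a stake `σ` with respect to a hedge `(S,T)`:
the unique chain in `span T` whose boundary has coefficient `1` on `σ` and `0`
on all other stakes. -/
def shrub (S T : Finset (Finset (Fin 3))) (σ : Finset (Fin 3)) : Ch k :=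
  if h : ∃! s : Ch k, s ∈ Submodule.span k (sset k (T : Set (Finset (Fin 3)))) ∧
      bdry k s σ = 1 ∧ ∀ σ' ∈ S, σ' ≠ σ → bdry k s σ' = 0
  then h.exists.choose else 0

/-- The hedge rim `r(τ)` of a face `τ` with respect to a stake set `S`:
the unique chain supported outside `S` with `τ - r(τ)` a boundary. -/
def hedgeRim (Kc : Set (Finset (Fin 3))) (c : ℕ) (S : Finset (Finset (Fin 3)))
    (τ : Finset (Fin 3)) : Ch k :=
  if h : ∃! r : Ch k,
      r ∈ Submodule.span k (sset k (faces Kc c \ (S : Set (Finset (Fin 3))))) ∧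
      Finsupp.single τ (1:k) - r ∈ bdries k Kc c
  then h.exists.choose else 0

/-- The points of the saturated decreasing lattice path from `pt a d n` down to `a`
encoded by the list of directions `d` (read from `a` upwards). -/
def pt (a : V3) {n : ℕ} (d : Fin n → Fin 3) (m : ℕ) : V3 :=
  fun i => a i + ∑ m' ∈ Finset.range m, (if h : m' < n then stdVec (d ⟨m', h⟩) i else 0)

/-- The data of a hedgerow: `(Sb, S, T, Ta)`. -/
abbrev HRData (n : ℕ) :=
  Finset (Finset (Fin 3)) × (Fin (n+1) → Finset (Finset (Fin 3))) ×
    (Fin (n+1) → Finset (Finset (Fin 3))) × Finset (Finset (Fin 3))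

/-- A hedgerow in homological dimension `c-1` along the lattice path from `pt a d n`
down to `a`: a stake set in the Koszul complex at the top, a hedge at each interior
lattice point, and a shrubbery at the bottom.  (Unused components are pinned to `∅`.) -/
def IsHedgerow (I : Set V3) (a : V3) {n : ℕ} (d : Fin n → Fin 3) (c : ℕ)
    (h : HRData n) : Prop :=
  IsStakeSet k (K I (pt a d n)) c h.1 ∧
  (∀ m : Fin (n+1), 0 < (m:ℕ) → (m:ℕ) < n →
    IsStakeSet k (K I (pt a d m)) (c-1) (h.2.1 m) ∧
    IsShrubbery k (K I (pt a d m)) c (h.2.2.1 m)) ∧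
  (∀ m : Fin (n+1), ((m:ℕ) = 0 ∨ (m:ℕ) = n) → h.2.1 m = ∅ ∧ h.2.2.1 m = ∅) ∧
  IsShrubbery k (K I a) (c-1) h.2.2.2

/-- `Δ_{c-1,λ} I`: the number of hedgerows along the lattice path. -/
def Delta (I : Set V3) (a : V3) {n : ℕ} (d : Fin n → Fin 3) (c : ℕ) : ℕ :=
  Nat.card {h : HRData n // IsHedgerow k I a d c h}

/-- The data of a chain-link fence: a hedgerow together with the faces `τ_ℓ` and
`σ_ℓ` (indexed here by the lattice point `pt a d m`, so `τ_ℓ = tau (n-ℓ)` and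
`σ_ℓ = sig (n-ℓ)`). -/
abbrev FData (n : ℕ) :=
  HRData n × (Fin (n+1) → Finset (Fin 3)) × (Fin (n+1) → Finset (Fin 3))

/-- A chain-link fence from the card-`c` face `τtop` of the Koszul complex at the top
of the lattice path to the card-`(c-1)` face `σbot` of the Koszul complex at the
bottom. -/
def IsFence (I : Set V3) (a : V3) {n : ℕ} (d : Fin n → Fin 3) (c : ℕ)
    (σbot τtop : Finset (Fin 3)) (f : FData n) : Prop :=
  IsHedgerow k I a d c f.1 ∧
  (∀ m : Fin (n+1), 0 < (m:ℕ) → f.2.1 m ∈ faces (K I (pt a d m)) c) ∧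
  (∀ m : Fin (n+1), (m:ℕ) < n → f.2.2 m ∈ faces (K I (pt a d m)) (c-1)) ∧
  f.2.1 0 = ∅ ∧ f.2.2 (Fin.last n) = ∅ ∧
  hedgeRim k (K I (pt a d n)) c f.1.1 τtop (f.2.1 (Fin.last n)) ≠ 0 ∧
  (∀ m : Fin n, f.2.2 m.castSucc = (f.2.1 m.succ).erase (d m)) ∧
  (∀ m : Fin (n+1), 0 < (m:ℕ) → (m:ℕ) < n →
    f.2.2 m ∈ f.1.2.1 m ∧
    shrub k (f.1.2.1 m) (f.1.2.2.1 m) (f.2.2 m) (f.2.1 m) ≠ 0) ∧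
  circuit k f.1.2.2.2 (f.2.2 0) σbot ≠ 0

/-- The weight of a chain-link fence: the product of the boundary-link coefficient,
the chain-link coefficients, the containment coefficients, and the cycle-link
coefficient. -/
def weight (I : Set V3) (a : V3) {n : ℕ} (d : Fin n → Fin 3) (c : ℕ)
    (σbot τtop : Finset (Fin 3)) (f : FData n) : k :=
  hedgeRim k (K I (pt a d n)) c f.1.1 τtop (f.2.1 (Fin.last n)) *
  (∏ m : Fin (n+1), if 0 < (m:ℕ) ∧ (m:ℕ) < n
      then shrub k (f.1.2.1 m) (f.1.2.2.1 m) (f.2.2 m) (f.2.1 m) else 1) *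
  (∏ m : Fin n, bdry k (Finsupp.single (f.2.1 m.succ) (1:k)) (f.2.2 m.castSucc)) *
  circuit k f.1.2.2.2 (f.2.2 0) σbot

/-- `D_{σ,τ}^{a,b,λ}`: the contribution of the single lattice path `λ` (encoded by
its direction sequence `d`) to the canonical sylvan matrix entry. -/
def Dpath (I : Set V3) (a : V3) {n : ℕ} (d : Fin n → Fin 3) (c : ℕ)
    (σbot τtop : Finset (Fin 3)) : k :=
  ((Delta k I a d c : k))⁻¹ *
    ∑ᶠ f ∈ {f : FData n | IsFence k I a d c σbot τtop f}, weight k I a d c σbot τtop f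

/-- `|b - a|`, the common length of all saturated decreasing lattice paths. -/
def nlen (a b : V3) : ℕ := ∑ i, (b i - a i)

/-- The canonical sylvan matrix entry `D_{σ,τ}^{a,b}`: a sum over all saturated
decreasing lattice paths from `b` to `a`. -/
def D (I : Set V3) (a b : V3) (c : ℕ) (σbot τtop : Finset (Fin 3)) : k :=
  ∑ᶠ d ∈ {d : Fin (nlen a b) → Fin 3 | pt a d (nlen a b) = b},
    Dpath k I a d c σbot τtop

/-- `K` has exactly the set `F` as facets, i.e. it is the downward closure of `F`. -/
def hasFacets (Kc F : Set (Finset (Fin 3))) : Prop :=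
  Kc = {σ | ∃ f ∈ F, σ ⊆ f}

/-- `dim_k H̃₀(K;k) ≠ 0`: some reduced 0-cycle is not a boundary. -/
def H0nontrivial (Kc : Set (Finset (Fin 3))) : Prop :=
  ¬ (chains k Kc 1 ⊓ LinearMap.ker (bdry k) ≤ bdries k Kc 1)


private lemma K_mono {I : Set V3} (hI : IsMonomialIdeal I) {b b' : V3}
    (h : ∀ i, b' i ≤ b i) {τ : Finset (Fin 3)} (hτ : τ ∈ K I b') : τ ∈ K I b := by
  obtain ⟨h1, h2⟩ := hτ
  exact ⟨fun i => le_trans (h1 i) (h i),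
    hI h2 fun i => Nat.sub_le_sub_right (h i) _⟩

private lemma pt_mono (a : V3) {n : ℕ} (d : Fin n → Fin 3) {m m' : ℕ} (h : m ≤ m')
    (i : Fin 3) : pt a d m i ≤ pt a d m' i := by
  unfold pt
  exact Nat.add_le_add_left (Finset.sum_le_sum_of_subset (Finset.range_subset_range.mpr h)) _

private lemma pt_succ (a : V3) {n : ℕ} (d : Fin n → Fin 3) (m : ℕ) (i : Fin 3) :
    pt a d (m+1) i = pt a d m i + (if h : m < n then stdVec (d ⟨m, h⟩) i else 0) := by
  unfold pt
  rw [Finset.sum_range_succ, Nat.add_assoc]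

private lemma bdry_single (k : Type) [Field k] (σ : Finset (Fin 3)) (c : k) :
    bdry k (Finsupp.single σ c) = c • bd k σ := by
  unfold bdry
  rw [Finsupp.lsum_single, LinearMap.toSpanSingleton_apply]

private lemma lemA (k : Type) [Field k] (Kb : Set (Finset (Fin 3)))
    (S : Finset (Finset (Fin 3))) (hS : IsStakeSet k Kb 1 S) (v u : Fin 3)
    (r : Ch k)
    (hr1 : r ∈ Submodule.span k (sset k (faces Kb 1 \ (S : Set (Finset (Fin 3))))))
    (hr2 : Finsupp.single ({v} : Finset (Fin 3)) (1:k) - r ∈ bdries k Kb 1)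
    (hru : r ({u} : Finset (Fin 3)) ≠ 0) :
    Relation.ReflTransGen (fun x y : Fin 3 => x ≠ y ∧ ({x, y} : Finset (Fin 3)) ∈ Kb) v u := by
  by_contra hvu
  set e : Fin 3 → Fin 3 → Prop := fun x y => x ≠ y ∧ ({x, y} : Finset (Fin 3)) ∈ Kb with he
  have esymm : Symmetric e := fun x y h => ⟨h.1.symm, by rw [Finset.pair_comm]; exact h.2⟩
  set p : Finset (Fin 3) → Prop :=
    fun σ => ∃ x, σ = {x} ∧ Relation.ReflTransGen e u x with hp
  have hpu : p ({u} : Finset (Fin 3)) := ⟨u, rfl, Relation.ReflTransGen.refl⟩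
  have hpv : ¬ p ({v} : Finset (Fin 3)) := by
    rintro ⟨z, hz, hR⟩
    rw [← Finset.singleton_injective hz] at hR
    exact hvu (by haveI : Std.Symm e := ⟨esymm⟩; exact Std.Symm.symm _ _ hR)
  set π : Ch k →ₗ[k] Ch k :=
    Finsupp.lsum k (fun σ => LinearMap.toSpanSingleton k (Ch k)
      (if p σ then Finsupp.single σ (1:k) else 0)) with hπ
  have πsingle : ∀ σ (c : k),
      π (Finsupp.single σ c) = if p σ then Finsupp.single σ c else 0 := by
    intro σ c
    rw [hπ, Finsupp.lsum_single, LinearMap.toSpanSingleton_apply]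
    split
    · rw [Finsupp.smul_single, smul_eq_mul, mul_one]
    · rw [smul_zero]
  have πeval : ∀ z : Ch k, π z ({u} : Finset (Fin 3)) = z ({u} : Finset (Fin 3)) := by
    intro z
    induction z using Finsupp.induction_linear with
    | zero => rw [map_zero]
    | add f g hf hg => rw [map_add, Finsupp.add_apply, hf, hg, Finsupp.add_apply]
    | single σ c =>
      rw [πsingle]
      by_cases hσ : σ = ({u} : Finset (Fin 3))
      · subst hσ
        rw [if_pos hpu]
      · rw [Finsupp.single_eq_of_ne (Ne.symm hσ)]
        split
        · exact Finsupp.single_eq_of_ne (Ne.symm hσ)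
        · rfl
  have hπspan : ∀ z ∈ Submodule.span k (sset k (faces Kb 1 \ (S : Set (Finset (Fin 3))))),
      π z ∈ Submodule.span k (sset k (faces Kb 1 \ (S : Set (Finset (Fin 3))))) := by
    intro z hz
    induction hz using Submodule.span_induction with
    | mem x hx =>
      obtain ⟨σ, hσ, rfl⟩ := hx
      rw [πsingle]
      split
      · exact Submodule.subset_span ⟨σ, hσ, rfl⟩
      · exact Submodule.zero_mem _
    | zero => rw [map_zero]; exact Submodule.zero_mem _
    | add x y hx hy ihx ihy => rw [map_add]; exact Submodule.add_mem _ ihx ihy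
    | smul c x hx ihx => rw [map_smul]; exact Submodule.smul_mem _ _ ihx
  have hbd : ∀ w ∈ bdries k Kb 1, π w ∈ bdries k Kb 1 := by
    intro w hw
    obtain ⟨z, hz, rfl⟩ := hw
    induction hz using Submodule.span_induction with
    | mem x hx =>
      obtain ⟨τ, hτ, rfl⟩ := hx
      obtain ⟨hτK, hτ2⟩ := hτ
      obtain ⟨x, y, hxy, rfl⟩ := Finset.card_eq_two.mp hτ2
      have hbs : bdry k (Finsupp.single ({x, y} : Finset (Fin 3)) (1:k)) = bd k {x, y} := by
        rw [bdry_single, one_smul]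
      have e1 : ({x, y} : Finset (Fin 3)).erase x = {y} :=
        Finset.erase_insert (fun hmem => hxy (Finset.mem_singleton.mp hmem))
      have e2 : ({x, y} : Finset (Fin 3)).erase y = {x} := by
        rw [Finset.pair_comm]
        exact Finset.erase_insert (fun hmem => hxy (Finset.mem_singleton.mp hmem).symm)
      have hbd2 : bd k ({x, y} : Finset (Fin 3)) =
          Finsupp.single ({y} : Finset (Fin 3)) ((esgn x {x, y} : ℤ) : k) +
          Finsupp.single ({x} : Finset (Fin 3)) ((esgn y {x, y} : ℤ) : k) := by
        unfold bd
        rw [Finset.sum_pair hxy, e1, e2]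
      have hexy : Relation.ReflTransGen e x y :=
        Relation.ReflTransGen.single ⟨hxy, hτK⟩
      have hpiff : p ({x} : Finset (Fin 3)) ↔ p ({y} : Finset (Fin 3)) := by
        constructor
        · rintro ⟨z, hz', hR⟩
          rw [← Finset.singleton_injective hz'] at hR
          exact ⟨y, rfl, hR.trans hexy⟩
        · rintro ⟨z, hz', hR⟩
          rw [← Finset.singleton_injective hz'] at hR
          exact ⟨x, rfl, hR.trans (Relation.ReflTransGen.single (esymm ⟨hxy, hτK⟩))⟩
      rw [hbs, hbd2, map_add, πsingle, πsingle]
      by_cases hpx : p ({x} : Finset (Fin 3))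
      · rw [if_pos hpx, if_pos (hpiff.mp hpx)]
        refine Submodule.mem_map.mpr ⟨Finsupp.single ({x, y} : Finset (Fin 3)) (1:k),
          Submodule.subset_span ⟨{x, y}, ⟨hτK, hτ2⟩, rfl⟩, ?_⟩
        rw [hbs, hbd2]
      · rw [if_neg hpx, if_neg (fun hy' => hpx (hpiff.mpr hy')), add_zero]
        exact Submodule.zero_mem _
    | zero => rw [map_zero, map_zero]; exact Submodule.zero_mem _
    | add x y hx hy ihx ihy => rw [map_add, map_add]; exact Submodule.add_mem _ ihx ihy
    | smul c x hx ihx => rw [map_smul, map_smul]; exact Submodule.smul_mem _ _ ihx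
  have h2 : π (Finsupp.single ({v} : Finset (Fin 3)) (1:k)) = 0 := by
    rw [πsingle, if_neg hpv]
  have h1 : π (Finsupp.single ({v} : Finset (Fin 3)) (1:k) - r) ∈ bdries k Kb 1 :=
    hbd _ hr2
  have h3 : π r ∈ bdries k Kb 1 := by
    have hsub : π r = π (Finsupp.single ({v} : Finset (Fin 3)) (1:k)) -
        π (Finsupp.single ({v} : Finset (Fin 3)) (1:k) - r) := by
      rw [← map_sub, sub_sub_cancel]
    rw [hsub, h2, zero_sub]
    exact Submodule.neg_mem _ h1
  have h4 : π r ∈ Submodule.span k (sset k (faces Kb 1 \ (S : Set (Finset (Fin 3))))) ⊓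
      bdries k Kb 1 := ⟨hπspan r hr1, h3⟩
  rw [hS.2.1] at h4
  have h5 : π r = 0 := (Submodule.mem_bot k).mp h4
  apply hru
  rw [← πeval r, h5]
  simp

/-- If `a` does not lie behind `b` in the direction of the connected
component of the vertex `v` of `K^b I`, then `D_{∅,v}^{a,b} = 0`. -/
theorem statement1 (k : Type) [Field k] (h2 : (2:k) ≠ 0) (h3 : (3:k) ≠ 0)
    (I : Set V3) (hI : IsMonomialIdeal I) (a b : V3) (hab : ∀ q, a q ≤ b q)
    (hH0 : H0nontrivial k (K I b))
    (v : Fin 3) (hv : ({v} : Finset (Fin 3)) ∈ K I b)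
    (hcomp : ¬ ({q : Fin 3 | a q < b q} ⊆
      {u : Fin 3 | ({u} : Finset (Fin 3)) ∈ K I b ∧
        Relation.ReflTransGen
          (fun x y : Fin 3 => x ≠ y ∧ ({x, y} : Finset (Fin 3)) ∈ K I b) v u})) :
    D k I a b 1 (∅ : Finset (Fin 3)) ({v} : Finset (Fin 3)) = 0 := by
  obtain ⟨q0, hq0A, hq0B⟩ := Set.not_subset.mp hcomp
  have hq0A' : a q0 < b q0 := hq0A
  have hkey : b q0 - a q0 ≤ nlen a b :=
    Finset.single_le_sum (f := fun i => b i - a i) (fun i _ => Nat.zero_le _)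
      (Finset.mem_univ q0)
  have hn1 : 1 ≤ nlen a b := by omega
  have hesymm : Symmetric (fun x y : Fin 3 => x ≠ y ∧ ({x, y} : Finset (Fin 3)) ∈ K I b) :=
    fun x y h => ⟨h.1.symm, by rw [Finset.pair_comm]; exact h.2⟩
  have hlt : nlen a b - 1 < nlen a b := by omega
  unfold D
  apply finsum_mem_of_eqOn_zero
  intro d hd
  have hd' : pt a d (nlen a b) = b := hd
  have hempty : {f : FData (nlen a b) |
      IsFence k I a d 1 (∅ : Finset (Fin 3)) ({v} : Finset (Fin 3)) f} = ∅ := by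
    rw [Set.eq_empty_iff_forall_notMem]
    intro f hf
    obtain ⟨hHR, hτf, hσf, -, -, hrim, hers, -, -⟩ := hf
    have hSb : IsStakeSet k (K I b) 1 f.1.1 := by
      have h := hHR.1
      rwa [hd'] at h
    rw [hd'] at hrim
    -- the faces τ_ℓ of the fence are {d m}
    have hτeq : ∀ m : Fin (nlen a b), f.2.1 m.succ = {d m} := by
      intro m
      have hσ := hσf m.castSucc (by rw [Fin.coe_castSucc]; exact m.isLt)
      have hσ0 : f.2.2 m.castSucc = ∅ := Finset.card_eq_zero.mp hσ.2
      have hτ := hτf m.succ (by rw [Fin.val_succ]; exact Nat.succ_pos _)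
      obtain ⟨x, hx⟩ := Finset.card_eq_one.mp hτ.2
      have hxd : x = d m := by
        by_contra hxd
        have h5 := hers m
        rw [hσ0, hx, Finset.erase_eq_of_notMem
          (fun hmem => hxd (Finset.mem_singleton.mp hmem).symm)] at h5
        exact Finset.singleton_ne_empty x h5.symm
      rw [hx, hxd]
    -- each vertex d m lies in K^b
    have hvtx : ∀ m : Fin (nlen a b), ({d m} : Finset (Fin 3)) ∈ K I b := by
      intro m
      have hτ := hτf m.succ (by rw [Fin.val_succ]; exact Nat.succ_pos _)
      have h1 := hτ.1
      rw [hτeq m] at h1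
      have hble : ∀ i, pt a d (↑m.succ : ℕ) i ≤ b i := by
        intro i
        have h7 := pt_mono a d
          (show ((m.succ : Fin (nlen a b + 1)) : ℕ) ≤ nlen a b by
            rw [Fin.val_succ]; exact m.isLt) i
        rwa [hd'] at h7
      exact K_mono hI hble h1
    -- interior lattice points lie in I
    have hbmI : ∀ m : ℕ, m < nlen a b → pt a d m ∈ I := by
      intro m hm
      have h := hσf ⟨m, by omega⟩ hm
      obtain ⟨hK, hcard⟩ := h
      rw [Finset.card_eq_zero.mp hcard] at hK
      have h2' := hK.2
      have hfun : (fun i => pt a d m i - ind (∅ : Finset (Fin 3)) i) = pt a d m := by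
        funext i
        simp [ind]
      rwa [hfun] at h2'
    -- consecutive vertices are joined by an edge of K^b
    have hedge : ∀ m1 m2 : Fin (nlen a b), (m1:ℕ) + 1 = (m2:ℕ) → d m1 ≠ d m2 →
        ({d m1, d m2} : Finset (Fin 3)) ∈ K I b := by
      intro m1 m2 h12 hxy
      have hlt1 : (m1:ℕ) < nlen a b := m1.isLt
      have hlt2 : (m1:ℕ) + 1 < nlen a b := by rw [h12]; exact m2.isLt
      have e1 : ∀ i, pt a d ((m1:ℕ)+2) i =
          pt a d (m1:ℕ) i + stdVec (d m1) i + stdVec (d m2) i := by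
        intro i
        rw [show (m1:ℕ)+2 = ((m1:ℕ)+1)+1 from rfl, pt_succ a d ((m1:ℕ)+1) i,
          pt_succ a d (m1:ℕ) i, dif_pos hlt1, dif_pos hlt2]
        have e3 : (⟨(m1:ℕ)+1, hlt2⟩ : Fin (nlen a b)) = m2 := Fin.ext h12
        rw [e3]
      have hble : ∀ i, pt a d (m1:ℕ) i + stdVec (d m1) i + stdVec (d m2) i ≤ b i := by
        intro i
        have h7 := pt_mono a d (show (m1:ℕ)+2 ≤ nlen a b by omega) i
        rw [hd'] at h7
        rw [← e1 i]
        exact h7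
      have hsv : ∀ i, ind ({d m1, d m2} : Finset (Fin 3)) i ≤
          stdVec (d m1) i + stdVec (d m2) i := by
        intro i
        by_cases hi : i ∈ ({d m1, d m2} : Finset (Fin 3))
        · rcases Finset.mem_insert.mp hi with h | h
          · have h1 : stdVec (d m1) i = 1 := by simp [stdVec, h]
            simp only [ind, if_pos hi, h1]
            omega
          · have h1 : stdVec (d m2) i = 1 := by simp [stdVec, Finset.mem_singleton.mp h]
            simp only [ind, if_pos hi, h1]
            omega
        · simp only [ind, if_neg hi]
          exact Nat.zero_le _
      refine ⟨fun i => ?_, ?_⟩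
      · have h5 := hble i
        have h6 := hsv i
        omega
      · refine hI (hbmI (m1:ℕ) hlt1) fun i => ?_
        have h5 := hble i
        have h6 := hsv i
        show pt a d (m1:ℕ) i ≤ b i - ind ({d m1, d m2} : Finset (Fin 3)) i
        omega
    -- all path directions are connected to the last one
    have hchain : ∀ j : ℕ, j < nlen a b →
        Relation.ReflTransGen
          (fun x y : Fin 3 => x ≠ y ∧ ({x, y} : Finset (Fin 3)) ∈ K I b)
          (d ⟨nlen a b - 1 - j, by omega⟩) (d ⟨nlen a b - 1, hlt⟩) := by
      intro j
      induction j with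
      | zero => intro _; exact Relation.ReflTransGen.refl
      | succ j ih =>
        intro hj
        have ih' := ih (by omega)
        by_cases hc : nlen a b - 1 - (j+1) = nlen a b - 1 - j
        · have hdd : d (⟨nlen a b - 1 - (j+1), by omega⟩ : Fin (nlen a b)) =
              d ⟨nlen a b - 1 - j, by omega⟩ := congrArg d (Fin.ext hc)
          exact hdd.symm ▸ ih'
        · have h12 : (nlen a b - 1 - (j+1)) + 1 = nlen a b - 1 - j := by omega
          by_cases hxy : d (⟨nlen a b - 1 - (j+1), by omega⟩ : Fin (nlen a b)) =
              d ⟨nlen a b - 1 - j, by omega⟩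
          · exact hxy.symm ▸ ih'
          · exact Relation.ReflTransGen.head
              ⟨hxy, hedge ⟨nlen a b - 1 - (j+1), by omega⟩ ⟨nlen a b - 1 - j, by omega⟩
                h12 hxy⟩ ih'
    have hchain' : ∀ m : Fin (nlen a b),
        Relation.ReflTransGen
          (fun x y : Fin 3 => x ≠ y ∧ ({x, y} : Finset (Fin 3)) ∈ K I b)
          (d m) (d ⟨nlen a b - 1, hlt⟩) := by
      intro m
      have hm := m.isLt
      have h := hchain (nlen a b - 1 - (m:ℕ)) (by omega)
      have hidx : d (⟨nlen a b - 1 - (nlen a b - 1 - (m:ℕ)), by omega⟩ : Fin (nlen a b)) =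
          d m := congrArg d (Fin.ext
            (show nlen a b - 1 - (nlen a b - 1 - (m:ℕ)) = (m:ℕ) by omega))
      exact hidx ▸ h
    -- extract the hedge rim
    unfold hedgeRim at hrim
    split_ifs at hrim with hex
    · have hr1 := hex.exists.choose_spec.1
      have hr2 := hex.exists.choose_spec.2
      have hlast : Fin.last (nlen a b) = Fin.succ (⟨nlen a b - 1, hlt⟩ : Fin (nlen a b)) :=
        Fin.ext (show nlen a b = nlen a b - 1 + 1 by omega)
      rw [hlast, hτeq ⟨nlen a b - 1, hlt⟩] at hrim
      have hRv := lemA k (K I b) f.1.1 hSb v (d ⟨nlen a b - 1, hlt⟩) _ hr1 hr2 hrim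
      apply hcomp
      intro q hq
      have hq' : a q < b q := hq
      have hqm : ∃ m : Fin (nlen a b), d m = q := by
        by_contra hno
        push_neg at hno
        have hz : ∀ m' ∈ Finset.range (nlen a b),
            (if h : m' < nlen a b then stdVec (d ⟨m', h⟩) q else 0) = 0 := by
          intro m' hm'
          rw [dif_pos (Finset.mem_range.mp hm')]
          have hne : ¬ (q = d ⟨m', Finset.mem_range.mp hm'⟩) :=
            fun hqd => hno _ hqd.symm
          simp only [stdVec, if_neg hne]
        have hb : pt a d (nlen a b) q = a q := by
          show a q + _ = a q
          rw [Finset.sum_eq_zero hz, Nat.add_zero]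
        rw [hd'] at hb
        omega
      obtain ⟨m, rfl⟩ := hqm
      exact ⟨hvtx m, hRv.trans (by haveI : Std.Symm (fun x y : Fin 3 => x ≠ y ∧ ({x, y} : Finset (Fin 3)) ∈ K I b) := ⟨hesymm⟩; exact Std.Symm.symm _ _ (hchain' m))⟩
    · exact hrim rfl
  simp only [Dpath, hempty, finsum_mem_empty, mul_zero, Pi.zero_apply]

end Sylvan

end
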